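/- Let R be a commutative ring, let k ≥ 2, let x_1, …, x_k be invertible elements of R with x̄_i := x_i^{−1}, let a = (a_1, a_2, …) be a sequence in R, and let m be any integer. Then h^{eo}_m((x_1,…,x_{k−1}),(x̄_1,…,x̄_{k−1})|a) − h^{eo}_m((x_2,…,x_k),(x̄_2,…,x̄_k)|a) = (x_1 + x̄_1 − x_k − x̄_k) · h^{eo}_{m−1}((x_1,…,x_k),(x̄_1,…,x̄_k)|a). (When k = 2 the two terms on the left are given by the n = 1 clause of the definition of h^{eo}.) -/

import Mathlib

open Finset

noncomputable def geom {R : Type*} [CommRing R] (x : R) : PowerSeries R :=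
  PowerSeries.mk fun k => x ^ k

noncomputable def lin {R : Type*} [CommRing R] (a : R) : PowerSeries R :=
  1 + PowerSeries.C a * PowerSeries.X

noncomputable def facpow {R : Type*} [CommRing R] (x : R) (a : ℕ → R) (m : ℕ) : R :=
  ∏ j ∈ Finset.range m, (x + a (j + 1))

noncomputable def hgl {R : Type*} [CommRing R] {n : ℕ} (x : Fin n → R) (a : ℕ → R) (m : ℤ) : R :=
  if 0 ≤ m then
    PowerSeries.coeff m.toNat
      ((∏ i, geom (x i)) * ∏ j ∈ Finset.range (n + m.toNat - 1), lin (a (j + 1)))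
  else 0

noncomputable def hsp {R : Type*} [CommRing R] {n : ℕ} (x : Fin n → Rˣ) (a : ℕ → R) (m : ℤ) : R :=
  if 0 ≤ m then
    PowerSeries.coeff m.toNat
      ((∏ i, geom ((x i : R)) * geom (((x i)⁻¹ : Rˣ) : R)) *
        ∏ j ∈ Finset.range (n + m.toNat - 1), lin (a (j + 1)))
  else 0

noncomputable def hoo {R : Type*} [CommRing R] {n : ℕ} (x : Fin n → Rˣ) (a : ℕ → R) (m : ℤ) : R :=
  if 0 ≤ m then
    PowerSeries.coeff m.toNat
      ((1 + PowerSeries.X) * (∏ i, geom ((x i : R)) * geom (((x i)⁻¹ : Rˣ) : R)) *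
        ∏ j ∈ Finset.range (n + m.toNat - 1), lin (a (j + 1)))
  else 0

noncomputable def heo {R : Type*} [CommRing R] {n : ℕ} (x : Fin n → Rˣ) (a : ℕ → R) (m : ℤ) : R :=
  if 0 ≤ m then
    if h : n = 1 then
      (PowerSeries.coeff m.toNat
        ((geom ((x ⟨0, by omega⟩ : Rˣ) : R) + geom (((x ⟨0, by omega⟩)⁻¹ : Rˣ) : R)) *
          ∏ j ∈ Finset.range m.toNat, lin (a (j + 1))))
        - (if m = 0 then 1 else 0)
    else
      PowerSeries.coeff m.toNat
        ((1 - PowerSeries.X ^ 2) * (∏ i, geom ((x i : R)) * geom (((x i)⁻¹ : Rˣ) : R)) *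
          ∏ j ∈ Finset.range (n + m.toNat - 1), lin (a (j + 1)))
  else 0

noncomputable def heod {R : Type*} [CommRing R] {n : ℕ} (x : Fin n → Rˣ) (a : ℕ → R) (m : ℤ) : R :=
  if 0 < m then
    if h : 0 < n then
      PowerSeries.coeff m.toNat
        ((geom ((x ⟨0, h⟩ : Rˣ) : R) - geom (((x ⟨0, h⟩)⁻¹ : Rˣ) : R)) *
          (∏ i ∈ Finset.univ.filter (fun i : Fin n => i ≠ ⟨0, h⟩),
            geom ((x i : R)) * geom (((x i)⁻¹ : Rˣ) : R)) *
          ∏ j ∈ Finset.range (n + m.toNat - 1), lin (a (j + 1)))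
    else 0
  else 0

namespace HeoAux

open PowerSeries

variable {R : Type*} [CommRing R]

lemma one_sub_mul_geom (x : R) : (1 - C x * X) * geom x = 1 := by
  have h : (1 - C x * X) * geom x = geom x - C x * (X * geom x) := by ring
  rw [h]; ext n
  cases n with
  | zero => simp [geom]
  | succ n => simp [geom, coeff_succ_X_mul, coeff_C_mul, pow_succ, mul_comm]

noncomputable def Gs (u : Rˣ) : PowerSeries R := geom (u : R) * geom ((u⁻¹ : Rˣ) : R)

noncomputable def Ds (u : Rˣ) : PowerSeries R :=
  (1 - C (u : R) * X) * (1 - C ((u⁻¹ : Rˣ) : R) * X)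

lemma hDG (u : Rˣ) : Ds u * Gs (R := R) u = 1 := by
  have h1 := one_sub_mul_geom (R := R) (u : R)
  have h2 := one_sub_mul_geom (R := R) ((u⁻¹ : Rˣ) : R)
  have h : Ds u * Gs (R := R) u
      = ((1 - C (u:R) * X) * geom (u:R)) * ((1 - C ((u⁻¹:Rˣ):R) * X) * geom ((u⁻¹:Rˣ):R)) := by
    unfold Ds Gs; ring
  rw [h, h1, h2, mul_one]

lemma Ds_eq (u : Rˣ) :
    Ds (R := R) u = 1 - C ((u : R) + ((u⁻¹ : Rˣ) : R)) * X + X ^ 2 := by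
  have h3 : C (u : R) * C ((u⁻¹ : Rˣ) : R) = 1 := by
    rw [← map_mul, Units.mul_inv, map_one]
  unfold Ds
  rw [map_add]
  linear_combination (X : PowerSeries R) ^ 2 * h3

lemma Gs_sub (u v : Rˣ) :
    Gs (R := R) u - Gs v
      = C ((u:R) + ((u⁻¹:Rˣ):R) - (v:R) - ((v⁻¹:Rˣ):R)) * X * (Gs u * Gs v) := by
  have h1 : Gs (R := R) u = Gs u * Gs v * Ds v := by
    calc Gs (R:=R) u = Gs u * (Ds v * Gs v) := by rw [hDG, mul_one]
    _ = Gs u * Gs v * Ds v := by ring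
  have h2 : Gs (R := R) v = Gs v * Gs u * Ds u := by
    calc Gs (R:=R) v = Gs v * (Ds u * Gs u) := by rw [hDG, mul_one]
    _ = Gs v * Gs u * Ds u := by ring
  calc Gs (R:=R) u - Gs v = Gs u * Gs v * Ds v - Gs v * Gs u * Ds u := by rw [← h1, ← h2]
  _ = _ := by rw [Ds_eq u, Ds_eq v]; simp only [map_sub, map_add]; ring

lemma sum_geom (u : Rˣ) :
    geom ((u:R)) + geom (((u⁻¹:Rˣ)):R) = 1 + (1 - X ^ 2) * Gs u := by
  have h1 := one_sub_mul_geom (R := R) (u : R)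
  have h2 := one_sub_mul_geom (R := R) ((u⁻¹ : Rˣ) : R)
  have key : geom ((u:R)) + geom (((u⁻¹:Rˣ)):R)
      = Gs u * (2 - C (u:R) * X - C ((u⁻¹:Rˣ):R) * X) := by
    calc geom ((u:R)) + geom (((u⁻¹:Rˣ)):R)
        = geom (u:R) * ((1 - C ((u⁻¹:Rˣ):R) * X) * geom ((u⁻¹:Rˣ):R))
          + geom ((u⁻¹:Rˣ):R) * ((1 - C (u:R) * X) * geom (u:R)) := by
          rw [h1, h2]; ring
    _ = _ := by unfold Gs; ring
  have key2 : (1 : PowerSeries R) + (1 - X ^ 2) * Gs u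
      = Gs u * (2 - C (u:R) * X - C ((u⁻¹:Rˣ):R) * X) := by
    calc (1 : PowerSeries R) + (1 - X ^ 2) * Gs u
        = Ds u * Gs u + (1 - X ^ 2) * Gs u := by rw [hDG]
    _ = _ := by rw [Ds_eq]; simp only [map_add]; ring
  rw [key, key2]

lemma core (k : ℕ) (hk : 2 ≤ k) (x : Fin k → Rˣ) :
    (∏ i : Fin (k-1), Gs (x ⟨(i : ℕ), i.isLt.trans_le (Nat.sub_le k 1)⟩))
      - (∏ i : Fin (k-1), Gs (x ⟨(i : ℕ) + 1, Nat.lt_sub_iff_add_lt.mp i.isLt⟩))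
    = C ((x ⟨0, by have _h := hk; omega⟩ : R) + (((x ⟨0, by have _h := hk; omega⟩)⁻¹ : Rˣ) : R)
        - (x ⟨k - 1, by have _h := hk; omega⟩ : R) - (((x ⟨k - 1, by have _h := hk; omega⟩)⁻¹ : Rˣ) : R)) * X
      * ∏ i, Gs (x i) := by
  classical
  set f : ℕ → PowerSeries R := fun i => if h : i < k then Gs (x ⟨i, h⟩) else 1 with hf
  have hP1 : (∏ i : Fin (k-1), Gs (x ⟨(i : ℕ), i.isLt.trans_le (Nat.sub_le k 1)⟩))
      = ∏ i ∈ range (k-1), f i := by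
    rw [← Fin.prod_univ_eq_prod_range (fun i => f i) (k-1)]
    apply Finset.prod_congr rfl
    intro i _
    have hi : (i : ℕ) < k := by have := i.isLt; have _h := hk; omega
    simp only [hf, dif_pos hi]
  have hP2 : (∏ i : Fin (k-1), Gs (x ⟨(i : ℕ) + 1, Nat.lt_sub_iff_add_lt.mp i.isLt⟩))
      = ∏ i ∈ range (k-1), f (i + 1) := by
    rw [← Fin.prod_univ_eq_prod_range (fun i => f (i + 1)) (k-1)]
    apply Finset.prod_congr rfl
    intro i _
    have hi : (i : ℕ) + 1 < k := by have := i.isLt; have _h := hk; omega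
    simp only [hf, dif_pos hi]
  have hPall : (∏ i, Gs (x i)) = ∏ i ∈ range k, f i := by
    rw [← Fin.prod_univ_eq_prod_range (fun i => f i) k]
    apply Finset.prod_congr rfl
    intro i _
    simp only [hf, dif_pos i.isLt]
  have e1 : (∏ i ∈ range k, f i) = (∏ i ∈ range (k-1), f i) * f (k-1) := by
    conv_lhs => rw [show k = (k-1) + 1 by omega]
    rw [Finset.prod_range_succ]
  have e2 : (∏ i ∈ range k, f i) = (∏ i ∈ range (k-1), f (i+1)) * f 0 := by
    conv_lhs => rw [show k = (k-1) + 1 by omega]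
    rw [Finset.prod_range_succ']
  have hfk : f (k-1) = Gs (x ⟨k-1, by omega⟩) := by
    simp only [hf, dif_pos (show k - 1 < k by omega)]
  have hf0 : f 0 = Gs (x ⟨0, by omega⟩) := by
    simp only [hf, dif_pos (show 0 < k by omega)]
  set u0 : Rˣ := x ⟨0, by omega⟩ with hu0
  set ul : Rˣ := x ⟨k-1, by omega⟩ with hul
  have hL : (∏ i ∈ range (k-1), f i) = (∏ i ∈ range k, f i) * Ds ul := by
    calc (∏ i ∈ range (k-1), f i)
        = (∏ i ∈ range (k-1), f i) * (Ds ul * Gs ul) := by rw [hDG, mul_one]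
    _ = ((∏ i ∈ range (k-1), f i) * f (k-1)) * Ds ul := by rw [hfk]; ring
    _ = _ := by rw [← e1]
  have hR : (∏ i ∈ range (k-1), f (i+1)) = (∏ i ∈ range k, f i) * Ds u0 := by
    calc (∏ i ∈ range (k-1), f (i+1))
        = (∏ i ∈ range (k-1), f (i+1)) * (Ds u0 * Gs u0) := by rw [hDG, mul_one]
    _ = ((∏ i ∈ range (k-1), f (i+1)) * f 0) * Ds u0 := by rw [hf0]; ring
    _ = _ := by rw [← e2]
  rw [hP1, hP2, hPall, hL, hR, Ds_eq u0, Ds_eq ul]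
  simp only [map_sub, map_add]
  ring

lemma coeff_step (c : R) (Q₁ Q₂ Qall L : PowerSeries R)
    (hQ : Q₁ - Q₂ = C c * X * Qall) (n : ℕ) :
    coeff (n+1) ((1 - X^2) * Q₁ * L) - coeff (n+1) ((1 - X^2) * Q₂ * L)
      = c * coeff n ((1 - X^2) * Qall * L) := by
  rw [← map_sub]
  have h : (1 - X^2) * Q₁ * L - (1 - X^2) * Q₂ * L
      = C c * (X * ((1 - X^2) * Qall * L)) := by
    linear_combination ((1 : PowerSeries R) - X^2) * L * hQ
  rw [h, coeff_C_mul, coeff_succ_X_mul]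

lemma coeff_step0 (c : R) (Q₁ Q₂ Qall L : PowerSeries R)
    (hQ : Q₁ - Q₂ = C c * X * Qall) :
    coeff 0 ((1 - X^2) * Q₁ * L) - coeff 0 ((1 - X^2) * Q₂ * L) = 0 := by
  rw [← map_sub]
  have h : (1 - X^2) * Q₁ * L - (1 - X^2) * Q₂ * L
      = C c * (X * ((1 - X^2) * Qall * L)) := by
    linear_combination ((1 : PowerSeries R) - X^2) * L * hQ
  rw [h]
  simp [coeff_zero_eq_constantCoeff, map_mul]

lemma sum_sub (u v : Rˣ) :
    (geom ((u:R)) + geom (((u⁻¹:Rˣ)):R)) - (geom ((v:R)) + geom (((v⁻¹:Rˣ)):R))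
      = C ((u:R) + ((u⁻¹:Rˣ):R) - (v:R) - ((v⁻¹:Rˣ):R)) * X
        * ((1 - X^2) * (Gs u * Gs v)) := by
  rw [sum_geom u, sum_geom v]
  linear_combination ((1 : PowerSeries R) - X^2) * Gs_sub (R := R) u v

lemma coeff_step2 (u v : Rˣ) (L : PowerSeries R) (n : ℕ) :
    coeff (n+1) ((geom ((u:R)) + geom (((u⁻¹:Rˣ)):R)) * L)
      - coeff (n+1) ((geom ((v:R)) + geom (((v⁻¹:Rˣ)):R)) * L)
    = ((u:R) + ((u⁻¹:Rˣ):R) - (v:R) - ((v⁻¹:Rˣ):R))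
        * coeff n ((1 - X^2) * (Gs u * Gs v) * L) := by
  rw [← map_sub]
  have h : (geom ((u:R)) + geom (((u⁻¹:Rˣ)):R)) * L
        - (geom ((v:R)) + geom (((v⁻¹:Rˣ)):R)) * L
      = C ((u:R) + ((u⁻¹:Rˣ):R) - (v:R) - ((v⁻¹:Rˣ):R))
          * (X * ((1 - X^2) * (Gs u * Gs v) * L)) := by
    linear_combination L * sum_sub (R := R) u v
  rw [h, coeff_C_mul, coeff_succ_X_mul]

lemma coeff_step2zero (u v : Rˣ) (L : PowerSeries R) :
    coeff 0 ((geom ((u:R)) + geom (((u⁻¹:Rˣ)):R)) * L)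
      - coeff 0 ((geom ((v:R)) + geom (((v⁻¹:Rˣ)):R)) * L) = 0 := by
  rw [← map_sub]
  have h : (geom ((u:R)) + geom (((u⁻¹:Rˣ)):R)) * L
        - (geom ((v:R)) + geom (((v⁻¹:Rˣ)):R)) * L
      = C ((u:R) + ((u⁻¹:Rˣ):R) - (v:R) - ((v⁻¹:Rˣ):R))
          * (X * ((1 - X^2) * (Gs u * Gs v) * L)) := by
    linear_combination L * sum_sub (R := R) u v
  rw [h]
  simp [coeff_zero_eq_constantCoeff, map_mul]

end HeoAux

/-- recurrence relation for `h^eo`. -/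
theorem heo_recurrence {R : Type*} [CommRing R] (k : ℕ) (hk : 2 ≤ k)
    (x : Fin k → Rˣ) (a : ℕ → R) (m : ℤ) :
    heo (fun i : Fin (k - 1) => x ⟨(i : ℕ), by have := i.isLt; omega⟩) a m
      - heo (fun i : Fin (k - 1) => x ⟨(i : ℕ) + 1, by have := i.isLt; omega⟩) a m =
    ((x ⟨0, by omega⟩ : R) + (((x ⟨0, by omega⟩)⁻¹ : Rˣ) : R)
        - (x ⟨k - 1, by omega⟩ : R) - (((x ⟨k - 1, by omega⟩)⁻¹ : Rˣ) : R)) *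
      heo x a (m - 1) := by
  classical
  rcases lt_trichotomy m 0 with hm | hm | hm
  · have h1 : ¬ (0 ≤ m) := by omega
    have h2 : ¬ (0 ≤ m - 1) := by omega
    simp [heo, h1, h2]
    intro h; omega
  · subst hm
    have hr : heo x a (0 - 1) = 0 := by
      rw [heo, if_neg (by omega : ¬ (0:ℤ) ≤ 0 - 1)]
    rw [hr, mul_zero]
    rcases eq_or_lt_of_le hk with hk2 | hk3
    · subst hk2
      simp only [heo]
      rw [if_pos (le_refl (0:ℤ)), if_pos (le_refl (0:ℤ))]
      rw [dif_pos trivial, dif_pos trivial]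
      simp only [Int.toNat_zero, if_true]
      linear_combination HeoAux.coeff_step2zero (R := R) (x ⟨0, by omega⟩) (x ⟨0+1, by omega⟩)
        (∏ j ∈ Finset.range 0, lin (a (j+1)))
    · have hne : ¬ (k - 1 = 1) := by omega
      simp only [heo]
      rw [if_pos (le_refl (0:ℤ)), if_pos (le_refl (0:ℤ))]
      rw [dif_neg hne, dif_neg hne]
      exact HeoAux.coeff_step0 _ _ _ _ _ (HeoAux.core k hk x)
  · obtain ⟨n, rfl⟩ : ∃ n : ℕ, m = (n:ℤ) + 1 := ⟨(m-1).toNat, by omega⟩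
    have ht1 : ((n:ℤ) + 1).toNat = n + 1 := by omega
    have ht2 : ((n:ℤ) + 1 - 1).toNat = n := by omega
    rcases eq_or_lt_of_le hk with hk2 | hk3
    · subst hk2
      simp only [heo, ht1, ht2]
      rw [if_pos (by omega : (0:ℤ) ≤ (n:ℤ) + 1), if_pos (by omega : (0:ℤ) ≤ (n:ℤ) + 1),
        if_pos (by omega : (0:ℤ) ≤ (n:ℤ) + 1 - 1)]
      rw [dif_pos trivial, dif_pos trivial, dif_neg (show ¬ (2 : ℕ) = 1 by omega)]
      rw [if_neg (show ¬ ((n:ℤ) + 1) = 0 by omega)]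
      rw [sub_zero, sub_zero]
      rw [show 2 + n - 1 = n + 1 by omega]
      rw [Fin.prod_univ_two]
      exact HeoAux.coeff_step2 (x ⟨0, by omega⟩) (x ⟨0+1, by omega⟩) _ n
    · have hne : ¬ (k - 1 = 1) := by omega
      have hne2 : ¬ (k = 1) := by omega
      simp only [heo, ht1, ht2]
      rw [if_pos (by omega : (0:ℤ) ≤ (n:ℤ) + 1), if_pos (by omega : (0:ℤ) ≤ (n:ℤ) + 1),
        if_pos (by omega : (0:ℤ) ≤ (n:ℤ) + 1 - 1)]
      rw [dif_neg hne, dif_neg hne, dif_neg hne2]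
      rw [show k - 1 + (n+1) - 1 = k + n - 1 by omega]
      exact HeoAux.coeff_step _ _ _ _ _ (HeoAux.core k hk x) n
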